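/- Density normalization of the packing construction: for a ∈ {0,1}ⁿ, define g_a on (0,1) by g_a(x) = 3 for 0 ≤ x < 1/12; g_a(x) = (4/3)((n−k+1)/n + a_k/n) + 1/2 for (k−1)/(2n) + 1/12 ≤ x < k/(2n) + 1/12 (k = 1,...,n); and g_a(x) = t_a for 7/12 ≤ x < 1, where t_a = 2/5 − 4/(5n) − (8/(5n²))∑_{k=1}ⁿ a_k. Then ∫₀¹ g_a(x) dx = 1, and for n sufficiently large g_a is non-increasing on (0,1). -/

import Mathlib

open MeasureTheory Set

/-- On `Ioo a b`, a function equal to `c` on `Ico a b` integrates to `(b-a)*c`. -/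
lemma aux_integral_Ioo_const {g : ℝ → ℝ} {a b c : ℝ} (hab : a ≤ b)
    (h : ∀ x ∈ Ico a b, g x = c) :
    ∫ x in Ioo a b, g x = (b - a) * c := by
  rw [setIntegral_congr_fun measurableSet_Ioo
    (fun x hx => h x ⟨hx.1.le, hx.2⟩)]
  simp [Real.volume_Ioo, ENNReal.toReal_ofReal (by linarith : (0:ℝ) ≤ b - a),
    mul_comm, hab]

lemma aux_integrableOn_Ioc {g : ℝ → ℝ} {a b c : ℝ}
    (h : ∀ x ∈ Ico a b, g x = c) :
    IntegrableOn g (Ioc a b) volume := by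
  have h1 : IntegrableOn g (Ico a b) volume := by
    refine IntegrableOn.congr_fun ?_ (fun x hx => (h x hx).symm) measurableSet_Ico
    exact integrableOn_const measure_Ico_lt_top.ne
  exact h1.congr_set_ae Ico_ae_eq_Ioc.symm

lemma aux_intervalIntegrable {g : ℝ → ℝ} {a b c : ℝ} (hab : a ≤ b)
    (h : ∀ x ∈ Ico a b, g x = c) :
    IntervalIntegrable g volume a b :=
  (intervalIntegrable_iff_integrableOn_Ioc_of_le hab).2 (aux_integrableOn_Ioc h)

lemma aux_intervalIntegral {g : ℝ → ℝ} {a b c : ℝ} (hab : a ≤ b)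
    (h : ∀ x ∈ Ico a b, g x = c) :
    ∫ x in a..b, g x = (b - a) * c := by
  rw [intervalIntegral.integral_of_le hab, integral_Ioc_eq_integral_Ioo,
    aux_integral_Ioo_const hab h]

set_option maxHeartbeats 1000000 in
/-- The step functions of the packing construction integrate to 1 and, for `n`
sufficiently large, are non-increasing on `(0,1)`. -/
theorem stmt_15 :
    ∃ N : ℕ, ∀ n : ℕ, 1 ≤ n → ∀ a : Fin n → Bool, ∀ g : ℝ → ℝ,
      (∀ x ∈ Ico (0:ℝ) (1/12), g x = 3) →
      (∀ k : Fin n, ∀ x ∈ Ico ((k.val : ℝ) / (2 * n) + 1/12)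
          (((k.val : ℝ) + 1) / (2 * n) + 1/12),
        g x = (4/3) * (((n : ℝ) - (k.val : ℝ)) / n + (if a k then 1 else 0) / n) + 1/2) →
      (∀ x ∈ Ico (7/12 : ℝ) 1,
        g x = 2/5 - 4 / (5 * n)
          - (8 / (5 * (n : ℝ) ^ 2)) * ∑ k : Fin n, (if a k then (1:ℝ) else 0)) →
      (∫ x in Ioo (0:ℝ) 1, g x = 1) ∧
      (N ≤ n → AntitoneOn g (Ioo (0:ℝ) 1)) := by
  refine ⟨2, fun n hn a g hlo hmid hhi => ?_⟩
  have hn0 : (0:ℝ) < n := by exact_mod_cast hn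
  have hn0' : (n:ℝ) ≠ 0 := ne_of_gt hn0
  set b : Fin n → ℝ := fun k => if a k then (1:ℝ) else 0 with hb
  have hb0 : ∀ k, 0 ≤ b k := fun k => by simp only [hb]; split <;> norm_num
  have hb1 : ∀ k, b k ≤ 1 := fun k => by simp only [hb]; split <;> norm_num
  set S : ℝ := ∑ k : Fin n, b k with hS
  have hS0 : 0 ≤ S := Finset.sum_nonneg fun k _ => hb0 k
  set t : ℝ := 2/5 - 4/(5*(n:ℝ)) - (8/(5*(n:ℝ)^2))*S with ht
  have hhi' : ∀ x ∈ Ico (7/12:ℝ) 1, g x = t := hhi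
  -- the breakpoints
  set f : ℕ → ℝ := fun i => (i:ℝ)/(2*(n:ℝ)) + 1/12 with hf
  have hfmono : ∀ i j : ℕ, i ≤ j → f i ≤ f j := by
    intro i j hij
    have : (i:ℝ) ≤ j := by exact_mod_cast hij
    simp only [hf]
    have h2n : (0:ℝ) < 2*(n:ℝ) := by positivity
    gcongr
  -- value on middle interval k
  set v : Fin n → ℝ :=
    fun k => (4/3) * (((n:ℝ) - (k.val:ℝ))/(n:ℝ) + b k/(n:ℝ)) + 1/2 with hv
  have hmid' : ∀ k : Fin n, ∀ x ∈ Ico (f k.val) (f (k.val + 1)), g x = v k := by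
    intro k x hx
    have := hmid k x ?_
    · simpa [hv, hb] using this
    · simpa [hf, Nat.cast_add, Nat.cast_one] using hx
  have ht2 : t ≤ 2/5 := by
    have h1 : 0 ≤ 4/(5*(n:ℝ)) := by positivity
    have h2 : 0 ≤ (8/(5*(n:ℝ)^2))*S := by positivity
    simp only [ht]; linarith
  have hvhalf : ∀ k : Fin n, 1/2 ≤ v k := by
    intro k
    have h1 : (k.val:ℝ) ≤ (n:ℝ) := by exact_mod_cast k.2.le
    have h2 : 0 ≤ ((n:ℝ) - (k.val:ℝ))/(n:ℝ) := by
      apply div_nonneg (by linarith) hn0.le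
    have h3 : 0 ≤ b k/(n:ℝ) := div_nonneg (hb0 k) hn0.le
    simp only [hv]; nlinarith
  constructor
  · -- the integral equals 1
    have hint : ∀ i < n, IntervalIntegrable g volume (f i) (f (i+1)) := by
      intro i hi
      exact aux_intervalIntegrable (hfmono i (i+1) (by omega)) (hmid' ⟨i, hi⟩)
    have hI1 : IntervalIntegrable g volume 0 (1/12) :=
      aux_intervalIntegrable (by norm_num) hlo
    have hI3 : IntervalIntegrable g volume (7/12) 1 :=
      aux_intervalIntegrable (by norm_num) hhi'
    have hf0 : f 0 = 1/12 := by simp [hf]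
    have hfn : f n = 7/12 := by
      simp only [hf]; field_simp; ring
    have hI2 : IntervalIntegrable g volume (1/12) (7/12) := by
      rw [← hf0, ← hfn]; exact IntervalIntegrable.trans_iterate hint
    have hsplit : ∫ x in Ioo (0:ℝ) 1, g x
        = (∫ x in (0:ℝ)..(1/12), g x) + (∫ x in (1/12:ℝ)..(7/12), g x)
          + (∫ x in (7/12:ℝ)..1, g x) := by
      rw [intervalIntegral.integral_add_adjacent_intervals hI1 hI2,
        intervalIntegral.integral_add_adjacent_intervals (hI1.trans hI2) hI3,
        intervalIntegral.integral_of_le (by norm_num : (0:ℝ) ≤ 1),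
        integral_Ioc_eq_integral_Ioo]
    have e1 : ∫ x in (0:ℝ)..(1/12), g x = (1/12) * 3 := by
      have := aux_intervalIntegral (by norm_num : (0:ℝ) ≤ 1/12) hlo
      simpa using this
    have e3 : ∫ x in (7/12:ℝ)..1, g x = (5/12) * t := by
      have := aux_intervalIntegral (by norm_num : (7/12:ℝ) ≤ 1) hhi'
      rw [this]; norm_num
    have e2 : ∫ x in (1/12:ℝ)..(7/12), g x = ∑ k : Fin n, (1/(2*(n:ℝ))) * v k := by
      rw [← hf0, ← hfn, ← intervalIntegral.sum_integral_adjacent_intervals hint,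
        ← Fin.sum_univ_eq_sum_range (fun i => ∫ x in f i..f (i+1), g x) n]
      refine Finset.sum_congr rfl fun k _ => ?_
      rw [aux_intervalIntegral (hfmono k.val (k.val+1) (by omega)) (hmid' k)]
      congr 1
      simp only [hf]
      push_cast
      field_simp
      ring
    -- Gauss sum
    have hgauss : ∑ k : Fin n, (k.val : ℝ) = (n:ℝ) * ((n:ℝ) - 1) / 2 := by
      rw [Fin.sum_univ_eq_sum_range (fun i => (i:ℝ)) n]
      have h2 : ((∑ i ∈ Finset.range n, i : ℕ) : ℝ) * 2 = (n:ℝ) * ((n:ℝ) - 1) := by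
        have := Finset.sum_range_id_mul_two n
        have hcast : (((∑ i ∈ Finset.range n, i) * 2 : ℕ) : ℝ)
            = ((n * (n-1) : ℕ) : ℝ) := by exact_mod_cast congrArg Nat.cast this
        push_cast [Nat.cast_sub hn] at hcast
        push_cast
        linarith
      push_cast at h2 ⊢
      linarith
    have hsum : ∑ k : Fin n, (1/(2*(n:ℝ))) * v k
        = (2/(3*(n:ℝ)^2)) * ((n:ℝ)*(n:ℝ) - (n:ℝ)*((n:ℝ)-1)/2)
          + (2/(3*(n:ℝ)^2)) * S + 1/4 := by
      have : ∀ k : Fin n, (1/(2*(n:ℝ))) * v k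
          = (2/(3*(n:ℝ)^2)) * ((n:ℝ) - (k.val:ℝ))
            + (2/(3*(n:ℝ)^2)) * b k + 1/(4*(n:ℝ)) := by
        intro k
        simp only [hv]
        field_simp
        ring
      rw [Finset.sum_congr rfl fun k _ => this k]
      rw [Finset.sum_add_distrib, Finset.sum_add_distrib, Finset.sum_const,
        ← Finset.mul_sum, ← Finset.mul_sum, Finset.sum_sub_distrib,
        Finset.sum_const, hgauss, ← hS]
      simp only [Finset.card_univ, Fintype.card_fin, nsmul_eq_mul]
      field_simp
    rw [hsplit, e1, e2, e3, hsum, ht]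
    field_simp
    ring
  · -- antitone for n ≥ 2
    intro hn2 x hx y hy hxy
    have hn2' : (2:ℝ) ≤ (n:ℝ) := by exact_mod_cast hn2
    -- v is bounded by 3 (needs n ≥ 2)
    have hv3 : ∀ k : Fin n, v k ≤ 3 := by
      intro k
      have h1 : ((n:ℝ) - (k.val:ℝ))/(n:ℝ) ≤ 1 := by
        rw [div_le_one hn0]
        have hk0 : (0:ℝ) ≤ (k.val:ℝ) := Nat.cast_nonneg _
        linarith
      have h2 : b k/(n:ℝ) ≤ 1/2 := by
        rw [div_le_iff₀ hn0]
        nlinarith [hb1 k]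
      simp only [hv]
      linarith
    -- v is antitone in k
    have hvmono : ∀ k k' : Fin n, k.val ≤ k'.val → v k' ≤ v k := by
      intro k k' hkk
      rcases eq_or_lt_of_le hkk with h | h
      · have : k = k' := Fin.ext h
        subst this; exact le_rfl
      · have h1 : (k.val:ℝ) + 1 ≤ (k'.val:ℝ) := by exact_mod_cast h
        have key : ((n:ℝ) - (k'.val:ℝ)) + b k' ≤ ((n:ℝ) - (k.val:ℝ)) + b k := by
          linarith [hb0 k, hb1 k']
        simp only [hv, ← add_div]
        have h3 : ((n:ℝ) - (k'.val:ℝ) + b k')/(n:ℝ)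
            ≤ ((n:ℝ) - (k.val:ℝ) + b k)/(n:ℝ) := by gcongr
        linarith
    -- locating a point of the middle region
    have hexk : ∀ z : ℝ, 1/12 ≤ z → z < 7/12 →
        ∃ k : Fin n, z ∈ Ico (f k.val) (f (k.val + 1)) := by
      intro z h1 h2
      have h2n : (0:ℝ) < 2*(n:ℝ) := by positivity
      set w : ℝ := (z - 1/12) * (2*(n:ℝ)) with hw
      have hw0 : 0 ≤ w := by
        apply mul_nonneg (by linarith) h2n.le
      have hwn : w < (n:ℝ) := by
        simp only [hw]; nlinarith
      have hk : Nat.floor w < n := by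
        rw [Nat.floor_lt hw0]; exact_mod_cast hwn
      have hA : (Nat.floor w : ℝ) ≤ w := Nat.floor_le hw0
      have hB : w < (Nat.floor w : ℝ) + 1 := Nat.lt_floor_add_one w
      have h1' : (Nat.floor w : ℝ)/(2*(n:ℝ)) ≤ z - 1/12 := by
        rw [div_le_iff₀ h2n]; linarith
      have h2' : z - 1/12 < ((Nat.floor w : ℝ) + 1)/(2*(n:ℝ)) := by
        rw [lt_div_iff₀ h2n]; linarith
      refine ⟨⟨Nat.floor w, hk⟩, ?_, ?_⟩
      · simp only [hf]
        linarith
      · simp only [hf]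
        push_cast
        linarith
    -- case analysis
    rcases lt_or_ge y (1/12) with hy1 | hy1
    · have hx1 : x < 1/12 := lt_of_le_of_lt hxy hy1
      rw [hlo x ⟨hx.1.le, hx1⟩, hlo y ⟨hy.1.le, hy1⟩]
    rcases lt_or_ge y (7/12) with hy2 | hy2
    · obtain ⟨ky, hky⟩ := hexk y hy1 hy2
      rw [hmid' ky y hky]
      rcases lt_or_ge x (1/12) with hx1 | hx1
      · rw [hlo x ⟨hx.1.le, hx1⟩]; exact hv3 ky
      · have hx2 : x < 7/12 := lt_of_le_of_lt hxy hy2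
        obtain ⟨kx, hkx⟩ := hexk x hx1 hx2
        rw [hmid' kx x hkx]
        apply hvmono
        by_contra hc
        push_neg at hc
        have hle : f (ky.val + 1) ≤ f kx.val := hfmono _ _ (by omega)
        linarith [hkx.1, hky.2]
    · rw [hhi' y ⟨hy2, hy.2⟩]
      rcases lt_or_ge x (1/12) with hx1 | hx1
      · rw [hlo x ⟨hx.1.le, hx1⟩]
        exact le_trans ht2 (by norm_num)
      rcases lt_or_ge x (7/12) with hx2 | hx2
      · obtain ⟨kx, hkx⟩ := hexk x hx1 hx2
        rw [hmid' kx x hkx]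
        exact le_trans ht2 (le_trans (by norm_num) (hvhalf kx))
      · rw [hhi' x ⟨hx2, hx.2⟩]
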